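/- arXiv:1708.00233 — 2 statements merged into one kernel-verified Lean document; each statement's English description precedes it below -/
import Mathlib

section
/- First-derivative identity for the Perron eigenvalue (Lemma 3.13, equation for K'). Fix λ₀ ∈ ℝ. Suppose λ ↦ k(λ) ∈ (0,∞) and λ ↦ v_λ(i) (for each i ∈ 𝕏) are differentiable at λ₀, with P_λ v_λ = k(λ) v_λ for all λ in a neighbourhood of λ₀, where P_λ g(i) = Σ_j P(i,j) e^{λρ(j)} g(j). Suppose ν is a linear functional on functions 𝕏 → ℝ such that ν(P_{λ₀} g) = k(λ₀) ν(g) for every g and ν(v_{λ₀}) = 1. Then k'(λ₀) = k(λ₀) · ν(ρ · v_{λ₀}); equivalently, (ln k)'(λ₀) = ν̃(ρ) where ν̃(g) := ν(g · v_{λ₀}). -/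
/- STATEMENT 14: First-derivative identity for the Perron eigenvalue (Lemma 3.13).
𝕏 finite, P a stochastic matrix, ρ : 𝕏 → ℝ, transfer operator
P_λ g(i) = Σ_j P(i,j) e^{λρ(j)} g(j). Fix λ₀. Suppose k(λ) ∈ (0,∞) and
v_λ(i) are differentiable at λ₀, with P_λ v_λ = k(λ) v_λ for λ near λ₀, and ν
is a linear functional with ν(P_{λ₀} g) = k(λ₀) ν(g) for all g and ν(v_{λ₀}) = 1.
Then k'(λ₀) = k(λ₀) · ν(ρ · v_{λ₀}). -/

open Finset Filter Topology

theorem perron_eigenvalue_derivative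
    {𝕏 : Type*} [Fintype 𝕏] [Nonempty 𝕏]
    (P : 𝕏 → 𝕏 → ℝ) (ρ : 𝕏 → ℝ)
    (hP_nonneg : ∀ i j, 0 ≤ P i j) (hP_row : ∀ i, ∑ j, P i j = 1)
    (lam₀ : ℝ) (k : ℝ → ℝ) (v : ℝ → 𝕏 → ℝ)
    (hk_pos : ∀ l, 0 < k l)
    (k' : ℝ) (hk_deriv : HasDerivAt k k' lam₀)
    (v' : 𝕏 → ℝ) (hv_deriv : ∀ i, HasDerivAt (fun l => v l i) (v' i) lam₀)
    (heig : ∀ᶠ l in 𝓝 lam₀, ∀ i, ∑ j, P i j * Real.exp (l * ρ j) * v l j = k l * v l i)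
    (ν : (𝕏 → ℝ) → ℝ) (hν_lin : IsLinearMap ℝ ν)
    (hν_eig : ∀ g : 𝕏 → ℝ,
      ν (fun i => ∑ j, P i j * Real.exp (lam₀ * ρ j) * g j) = k lam₀ * ν g)
    (hν_norm : ν (v lam₀) = 1) :
    k' = k lam₀ * ν (fun i => ρ i * v lam₀ i) := by
  set A : 𝕏 → ℝ := fun i => ∑ j, P i j * Real.exp (lam₀ * ρ j) * (ρ j * v lam₀ j) with hA
  set B : 𝕏 → ℝ := fun i => ∑ j, P i j * Real.exp (lam₀ * ρ j) * v' j with hB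
  have key : ∀ i, A i + B i = k' * v lam₀ i + k lam₀ * v' i := by
    intro i
    have h1 : HasDerivAt (fun l => ∑ j, P i j * Real.exp (l * ρ j) * v l j)
        (A i + B i) lam₀ := by
      rw [hA, hB]
      simp only
      rw [← Finset.sum_add_distrib]
      apply HasDerivAt.fun_sum
      intro j _
      have hexp : HasDerivAt (fun l => Real.exp (l * ρ j))
          (Real.exp (lam₀ * ρ j) * ρ j) lam₀ := by
        have := ((hasDerivAt_id lam₀).mul_const (ρ j)).exp
        simpa using this
      have h := ((hexp.fun_mul (hv_deriv j)).const_mul (P i j))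
      have eqf : (fun y => P i j * Real.exp (y * ρ j) * v y j)
          = fun y => P i j * (Real.exp (y * ρ j) * v y j) := by funext y; ring
      rw [eqf]
      refine h.congr_deriv ?_
      ring
    have h2 : HasDerivAt (fun l => k l * v l i)
        (k' * v lam₀ i + k lam₀ * v' i) lam₀ := hk_deriv.mul (hv_deriv i)
    have heq : (fun l => ∑ j, P i j * Real.exp (l * ρ j) * v l j)
        =ᶠ[𝓝 lam₀] (fun l => k l * v l i) := heig.mono fun l hl => hl i
    exact (h1).unique (h2.congr_of_eventuallyEq heq)
  have hAB : (fun i => A i + B i) = (k' • v lam₀ + k lam₀ • v') := by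
    funext i
    simpa using key i
  have hν1 : ν (fun i => A i + B i) = ν A + ν B := hν_lin.map_add A B
  have hνA : ν A = k lam₀ * ν (fun i => ρ i * v lam₀ i) :=
    hν_eig (fun j => ρ j * v lam₀ j)
  have hνB : ν B = k lam₀ * ν v' := hν_eig v'
  have hν2 : ν (k' • v lam₀ + k lam₀ • v') = k' * ν (v lam₀) + k lam₀ * ν v' := by
    rw [hν_lin.map_add, hν_lin.map_smul, hν_lin.map_smul]
    simp [smul_eq_mul]
  rw [hAB] at hν1
  rw [hν2, hνA, hνB, hν_norm, mul_one] at hν1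
  linarith
end

section
/- Exponential-moment bound under the conditioned measure (Lemma 3.8, raw form). Let V : 𝕏 × ℝ → [0,∞) and suppose: (G) there is c₀ with V(i,y) ≤ c₀(1 + max(y,0)) for all (i,y); (L) there is C such that for every a > 0, every y ∈ ℝ, every z ≥ 0, every n ≥ 1 and every ψ : 𝕏 → [0,∞): sup_{i∈𝕏} 𝔼_i( ψ(X_n) ; y + S_n ∈ [z, z+a], τ_y > n ) ≤ C (1 + a³) n^{−3/2} ‖ψ‖_∞ (1 + z)(1 + max(y,0)). Then there is a constant C′ (depending only on c₀ and C) such that for every (i,y) ∈ 𝕏 × ℝ and every k ≥ 1: 𝔼_i( e^{−S_k} V(X_k, y + S_k) ; τ_y > k ) ≤ C′ (1 + max(y,0)) e^{y} k^{−3/2}; consequently Σ_{k=1}^∞ 𝔼_i( e^{−S_k} V(X_k, y + S_k) ; τ_y > k ) ≤ C′ (1 + max(y,0)) e^{y}. -/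
/- STATEMENT 19: Exponential-moment bound under the conditioned measure
(Lemma 3.8, raw form). 𝕏 finite nonempty, (X_n) a Markov chain with stochastic
matrix P under ℙ_i, S_n = ρ(X_1)+⋯+ρ(X_n), τ_y = inf{k ≥ 1 : y+S_k ≤ 0}
(the event {τ_y > n} is {∀ 1 ≤ k ≤ n, y + S_k > 0}).
Let V : 𝕏 × ℝ → [0,∞) satisfy (G) V(i,y) ≤ c₀(1+max(y,0)) and the local bound (L).
Then there is C′ with, for all (i,y) and k ≥ 1,
𝔼_i(e^{−S_k} V(X_k, y+S_k); τ_y > k) ≤ C′(1+max(y,0)) e^y k^{−3/2},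
and consequently Σ_{k≥1} 𝔼_i(e^{−S_k} V(X_k, y+S_k); τ_y > k) ≤ C′(1+max(y,0)) e^y. -/

open Finset Filter MeasureTheory

namespace Stmt19

variable {𝕏 : Type*}

/-- the Markov walk S_n = ρ(X_1) + ⋯ + ρ(X_n). -/
noncomputable def walk (ρ : 𝕏 → ℝ) {Ω : Type*} (X : ℕ → Ω → 𝕏) (n : ℕ) (ω : Ω) : ℝ :=
  ∑ k ∈ Finset.range n, ρ (X (k + 1) ω)

/-- the event {τ_y > n} = {∀ k, 1 ≤ k ≤ n → y + S_k > 0}. -/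
def surv (ρ : 𝕏 → ℝ) {Ω : Type*} (X : ℕ → Ω → 𝕏) (y : ℝ) (n : ℕ) : Set Ω :=
  {ω | ∀ k, 1 ≤ k → k ≤ n → 0 < y + walk ρ X k ω}

theorem exponential_moment_bound
    [Fintype 𝕏] [Nonempty 𝕏]
    [MeasurableSpace 𝕏] [MeasurableSingletonClass 𝕏]
    (P : 𝕏 → 𝕏 → ℝ)
    (hP_nonneg : ∀ i j, 0 ≤ P i j) (hP_row : ∀ i, ∑ j, P i j = 1)
    (ρ : 𝕏 → ℝ)
    {Ω : Type*} [MeasurableSpace Ω]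
    (Pr : 𝕏 → Measure Ω) (hPr : ∀ i, IsProbabilityMeasure (Pr i))
    (X : ℕ → Ω → 𝕏) (hX : ∀ n, Measurable (X n))
    (hchain : ∀ i (n : ℕ) (x : ℕ → 𝕏),
      Pr i {ω | X 0 ω = i ∧ ∀ k < n, X (k + 1) ω = x k} =
        ENNReal.ofReal (∏ k ∈ Finset.range n, P (if k = 0 then i else x (k - 1)) (x k)))
    (V : 𝕏 → ℝ → ℝ) (hV_nonneg : ∀ i y, 0 ≤ V i y)
    -- (G): growth bound on V
    (c₀ : ℝ)
    (hG : ∀ i y, V i y ≤ c₀ * (1 + max y 0))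
    -- (L): local limit type bound
    (C : ℝ)
    (hL : ∀ a : ℝ, 0 < a → ∀ y z : ℝ, 0 ≤ z → ∀ n : ℕ, 1 ≤ n →
      ∀ ψ : 𝕏 → ℝ, (∀ x, 0 ≤ ψ x) → ∀ i,
        ∫ ω in {ω | y + walk ρ X n ω ∈ Set.Icc z (z + a)} ∩ surv ρ X y n,
            ψ (X n ω) ∂(Pr i) ≤
          C * (1 + a ^ 3) / (n : ℝ) ^ (3 / 2 : ℝ) * (⨆ x, |ψ x|) *
            (1 + z) * (1 + max y 0)) :
    ∃ C' : ℝ, 0 < C' ∧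
      (∀ i (y : ℝ) (k : ℕ), 1 ≤ k →
        ∫ ω in surv ρ X y k,
            Real.exp (-(walk ρ X k ω)) * V (X k ω) (y + walk ρ X k ω) ∂(Pr i) ≤
          C' * (1 + max y 0) * Real.exp y / (k : ℝ) ^ (3 / 2 : ℝ)) ∧
      (∀ i (y : ℝ),
        ∑' k : ℕ,
            ∫ ω in surv ρ X y (k + 1),
              Real.exp (-(walk ρ X (k + 1) ω)) *
                V (X (k + 1) ω) (y + walk ρ X (k + 1) ω) ∂(Pr i) ≤
          C' * (1 + max y 0) * Real.exp y) := by
  classical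
  have hρm : Measurable ρ := measurable_of_countable ρ
  have hwalk : ∀ n : ℕ, Measurable (walk ρ X n) := by
    intro n
    have h : Measurable fun ω => ∑ k ∈ Finset.range n, ρ (X (k + 1) ω) :=
      Finset.measurable_sum _ (fun k _ => hρm.comp (hX (k + 1)))
    exact h
  have hsurv : ∀ (y : ℝ) (n : ℕ), MeasurableSet (surv ρ X y n) := by
    intro y n
    have h : surv ρ X y n =
        ⋂ (k : ℕ), ⋂ (_ : 1 ≤ k), ⋂ (_ : k ≤ n), {ω | 0 < y + walk ρ X k ω} := by
      ext ω; simp [surv, Set.mem_iInter]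
    rw [h]
    exact .iInter fun k => .iInter fun _ => .iInter fun _ =>
      measurableSet_lt measurable_const (measurable_const.add (hwalk k))
  obtain ⟨i₀⟩ := ‹Nonempty 𝕏›
  have hc₀ : 0 ≤ c₀ := by
    have h1 := hV_nonneg i₀ 0
    have h2 := hG i₀ 0
    simp at h2
    linarith
  set C₁ : ℝ := max C 0 with hC₁def
  have hC₁ : 0 ≤ C₁ := le_max_right _ _
  have hCC₁ : C ≤ C₁ := le_max_left _ _
  have hr1 : ‖Real.exp (-1)‖ < 1 := by
    rw [Real.norm_eq_abs, abs_of_pos (Real.exp_pos _)]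
    exact Real.exp_lt_one_iff.mpr (by norm_num)
  have hKsum : Summable (fun m : ℕ => (2 + (m : ℝ)) * (1 + (m : ℝ)) * Real.exp (-(m : ℝ))) := by
    have h1 := summable_pow_mul_geometric_of_norm_lt_one (R := ℝ) 2 hr1
    have h2 := (summable_pow_mul_geometric_of_norm_lt_one (R := ℝ) 1 hr1).mul_left 3
    have h3 := (summable_pow_mul_geometric_of_norm_lt_one (R := ℝ) 0 hr1).mul_left 2
    refine ((h1.add h2).add h3).congr fun m => ?_
    have he : Real.exp (-1) ^ m = Real.exp (-(m : ℝ)) := by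
      rw [← Real.exp_nat_mul]; ring_nf
    rw [he]; ring
  set K : ℝ := ∑' m : ℕ, (2 + (m : ℝ)) * (1 + (m : ℝ)) * Real.exp (-(m : ℝ)) with hKdef
  have hK0 : 0 ≤ K := tsum_nonneg fun m => by positivity
  set B : ℝ := 2 * C₁ * c₀ * K + 1 with hBdef
  have hB0 : 0 < B := by nlinarith [mul_nonneg (mul_nonneg (mul_nonneg (by norm_num : (0:ℝ) ≤ 2) hC₁) hc₀) hK0]
  have key : ∀ i (y : ℝ) (k : ℕ), 1 ≤ k →
      ∫ ω in surv ρ X y k,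
          Real.exp (-(walk ρ X k ω)) * V (X k ω) (y + walk ρ X k ω) ∂(Pr i) ≤
        B * (1 + max y 0) * Real.exp y / (k : ℝ) ^ (3 / 2 : ℝ) := by
    intro i y k hk
    have hPri := hPr i
    have hk0 : (0 : ℝ) < (k : ℝ) := by exact_mod_cast hk
    have hkpow : (0 : ℝ) < (k : ℝ) ^ (3 / 2 : ℝ) := Real.rpow_pos_of_pos hk0 _
    set f : Ω → ℝ := fun ω =>
      Real.exp (-(walk ρ X k ω)) * V (X k ω) (y + walk ρ X k ω) with hfdef
    have hf0 : ∀ ω, 0 ≤ f ω := fun ω => mul_nonneg (Real.exp_pos _).le (hV_nonneg _ _)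
    by_cases hint : IntegrableOn f (surv ρ X y k) (Pr i)
    · set s : ℕ → Set Ω := fun m =>
        {ω | y + walk ρ X k ω ∈ Set.Ico (m : ℝ) ((m : ℝ) + 1)} ∩ surv ρ X y k with hsdef
      have hsm : ∀ m, MeasurableSet (s m) := fun m =>
        ((measurable_const.add (hwalk k)) measurableSet_Ico).inter (hsurv y k)
      have hdisj : Pairwise (Function.onFun Disjoint s) := by
        intro m m' hmm
        simp only [Function.onFun, Set.disjoint_left]
        rintro ω ⟨h1, _⟩ ⟨h2, _⟩
        apply hmm
        have ha : (m : ℝ) < (m' : ℝ) + 1 := lt_of_le_of_lt h1.1 h2.2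
        have hb : (m' : ℝ) < (m : ℝ) + 1 := lt_of_le_of_lt h2.1 h1.2
        have ha' : m < m' + 1 := by exact_mod_cast ha
        have hb' : m' < m + 1 := by exact_mod_cast hb
        omega
      have hcover : surv ρ X y k = ⋃ m, s m := by
        ext ω
        constructor
        · intro hω
          have ht : 0 < y + walk ρ X k ω := hω k hk le_rfl
          exact Set.mem_iUnion.2 ⟨⌊y + walk ρ X k ω⌋₊,
            ⟨⟨Nat.floor_le ht.le, Nat.lt_floor_add_one _⟩, hω⟩⟩
        · intro hω
          obtain ⟨m, hm⟩ := Set.mem_iUnion.1 hω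
          exact hm.2
      have hint' : IntegrableOn f (⋃ m, s m) (Pr i) := hcover ▸ hint
      rw [hcover, integral_iUnion hsm hdisj hint']
      have hterm : ∀ m : ℕ, ∫ ω in s m, f ω ∂(Pr i) ≤
          2 * C₁ * c₀ * ((2 + (m : ℝ)) * (1 + (m : ℝ)) * Real.exp (-(m : ℝ))) *
            (Real.exp y * (1 + max y 0) / (k : ℝ) ^ (3 / 2 : ℝ)) := by
        intro m
        set c : ℝ := Real.exp y * Real.exp (-(m : ℝ)) * (c₀ * (2 + (m : ℝ))) with hcdef
        have hc0 : 0 ≤ c := by positivity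
        have hstep1 : ∫ ω in s m, f ω ∂(Pr i) ≤ ∫ _ω in s m, c ∂(Pr i) := by
          refine setIntegral_mono_on (hint.mono_set Set.inter_subset_right)
            (integrableOn_const (measure_ne_top _ _)) (hsm m) ?_
          rintro ω ⟨hIco, _⟩
          have ht0 : (m : ℝ) ≤ y + walk ρ X k ω := hIco.1
          have ht1 : y + walk ρ X k ω < (m : ℝ) + 1 := hIco.2
          have htnn : 0 ≤ y + walk ρ X k ω := le_trans (Nat.cast_nonneg m) ht0
          have h1 : Real.exp (-(walk ρ X k ω)) ≤ Real.exp y * Real.exp (-(m : ℝ)) := by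
            rw [← Real.exp_add]
            exact Real.exp_le_exp.2 (by linarith)
          have h2 : V (X k ω) (y + walk ρ X k ω) ≤ c₀ * (2 + (m : ℝ)) := by
            refine (hG _ _).trans ?_
            rw [max_eq_left htnn]
            exact mul_le_mul_of_nonneg_left (by linarith) hc₀
          exact mul_le_mul h1 h2 (hV_nonneg _ _) (by positivity)
        have hstep2 : ∫ _ω in s m, c ∂(Pr i) = (Pr i (s m)).toReal * c := by
          rw [setIntegral_const, smul_eq_mul]; rfl
        have hmeasle : (Pr i (s m)).toReal ≤
            C₁ * 2 / (k : ℝ) ^ (3 / 2 : ℝ) * (1 + (m : ℝ)) * (1 + max y 0) := by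
          have hLm := hL 1 one_pos y (m : ℝ) (Nat.cast_nonneg m) k hk
            (fun _ => 1) (fun _ => zero_le_one) i
          simp only [ciSup_const, abs_one, mul_one, setIntegral_const, smul_eq_mul] at hLm
          have hsub : s m ⊆ {ω | y + walk ρ X k ω ∈ Set.Icc (m : ℝ) ((m : ℝ) + 1)} ∩
              surv ρ X y k :=
            Set.inter_subset_inter_left _ (fun ω h => Set.Ico_subset_Icc_self h)
          have hmono : (Pr i (s m)).toReal ≤
              (Pr i ({ω | y + walk ρ X k ω ∈ Set.Icc (m : ℝ) ((m : ℝ) + 1)} ∩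
                surv ρ X y k)).toReal :=
            ENNReal.toReal_mono (measure_ne_top _ _) (measure_mono hsub)
          refine hmono.trans (hLm.trans ?_)
          have hnum : C * (1 + 1 ^ 3) = C * 2 := by norm_num
          have h11 : C * (1 + 1 ^ 3) / (k : ℝ) ^ (3 / 2 : ℝ) * (1 + (m : ℝ)) * (1 + max y 0) ≤
              C₁ * 2 / (k : ℝ) ^ (3 / 2 : ℝ) * (1 + (m : ℝ)) * (1 + max y 0) := by
            rw [hnum]
            gcongr
          exact h11
        have hq0 : (0 : ℝ) < Real.exp y * (1 + max y 0) / (k : ℝ) ^ (3 / 2 : ℝ) := by positivity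
        calc ∫ ω in s m, f ω ∂(Pr i) ≤ (Pr i (s m)).toReal * c := hstep1.trans_eq hstep2
          _ ≤ (C₁ * 2 / (k : ℝ) ^ (3 / 2 : ℝ) * (1 + (m : ℝ)) * (1 + max y 0)) * c :=
              mul_le_mul_of_nonneg_right hmeasle hc0
          _ = 2 * C₁ * c₀ * ((2 + (m : ℝ)) * (1 + (m : ℝ)) * Real.exp (-(m : ℝ))) *
              (Real.exp y * (1 + max y 0) / (k : ℝ) ^ (3 / 2 : ℝ)) := by
            rw [hcdef]; ring
      have hgsum : Summable (fun m : ℕ =>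
          2 * C₁ * c₀ * ((2 + (m : ℝ)) * (1 + (m : ℝ)) * Real.exp (-(m : ℝ))) *
            (Real.exp y * (1 + max y 0) / (k : ℝ) ^ (3 / 2 : ℝ))) :=
        (hKsum.mul_left _).mul_right _
      have htermnn : ∀ m, 0 ≤ ∫ ω in s m, f ω ∂(Pr i) := fun m =>
        setIntegral_nonneg (hsm m) (fun ω _ => hf0 ω)
      have hfsum : Summable (fun m => ∫ ω in s m, f ω ∂(Pr i)) :=
        Summable.of_nonneg_of_le htermnn hterm hgsum
      calc ∑' m, ∫ ω in s m, f ω ∂(Pr i) ≤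
          ∑' m : ℕ, 2 * C₁ * c₀ * ((2 + (m : ℝ)) * (1 + (m : ℝ)) * Real.exp (-(m : ℝ))) *
            (Real.exp y * (1 + max y 0) / (k : ℝ) ^ (3 / 2 : ℝ)) :=
          Summable.tsum_le_tsum hterm hfsum hgsum
        _ = 2 * C₁ * c₀ * K * (Real.exp y * (1 + max y 0) / (k : ℝ) ^ (3 / 2 : ℝ)) := by
          rw [tsum_mul_right, tsum_mul_left, hKdef]
        _ ≤ (2 * C₁ * c₀ * K + 1) * (Real.exp y * (1 + max y 0) / (k : ℝ) ^ (3 / 2 : ℝ)) := by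
          have hq0 : (0 : ℝ) ≤ Real.exp y * (1 + max y 0) / (k : ℝ) ^ (3 / 2 : ℝ) := by
            positivity
          nlinarith
        _ = B * (1 + max y 0) * Real.exp y / (k : ℝ) ^ (3 / 2 : ℝ) := by
          rw [hBdef]; ring
    · rw [integral_undef hint]
      have h1 : (0 : ℝ) < 1 + max y 0 := by positivity
      have := Real.exp_pos y
      positivity
  have hZsum : Summable (fun k : ℕ => 1 / ((k : ℝ) + 1) ^ (3 / 2 : ℝ)) := by
    have h := Real.summable_one_div_nat_rpow.mpr (by norm_num : (1 : ℝ) < 3 / 2)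
    have h2 := h.comp_injective Nat.succ_injective
    refine h2.congr fun n => ?_
    simp only [Function.comp_apply, Nat.succ_eq_add_one]
    push_cast
    ring_nf
  set Z : ℝ := ∑' k : ℕ, 1 / ((k : ℝ) + 1) ^ (3 / 2 : ℝ) with hZdef
  have hZ0 : 0 ≤ Z := tsum_nonneg fun k => by positivity
  refine ⟨B * (Z + 1), mul_pos hB0 (by linarith), ?_, ?_⟩
  · intro i y k hk
    refine (key i y k hk).trans ?_
    have hkpow : (0 : ℝ) < (k : ℝ) ^ (3 / 2 : ℝ) :=
      Real.rpow_pos_of_pos (by exact_mod_cast hk) _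
    have hBle : B ≤ B * (Z + 1) := by nlinarith
    have hm0 : (0 : ℝ) ≤ (1 + max y 0) * Real.exp y := by positivity
    rw [div_le_div_iff₀ hkpow hkpow]
    nlinarith [mul_pos (mul_pos (mul_pos hB0 (show (0:ℝ) < 1 + max y 0 by positivity))
      (Real.exp_pos y)) hkpow]
  · intro i y
    have hnn : ∀ k : ℕ, 0 ≤ ∫ ω in surv ρ X y (k + 1),
        Real.exp (-(walk ρ X (k + 1) ω)) *
          V (X (k + 1) ω) (y + walk ρ X (k + 1) ω) ∂(Pr i) := fun k =>
      setIntegral_nonneg (hsurv y (k + 1))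
        (fun ω _ => mul_nonneg (Real.exp_pos _).le (hV_nonneg _ _))
    have hb : ∀ k : ℕ, ∫ ω in surv ρ X y (k + 1),
        Real.exp (-(walk ρ X (k + 1) ω)) *
          V (X (k + 1) ω) (y + walk ρ X (k + 1) ω) ∂(Pr i) ≤
        B * (1 + max y 0) * Real.exp y * (1 / ((k : ℝ) + 1) ^ (3 / 2 : ℝ)) := by
      intro k
      refine (key i y (k + 1) (Nat.le_add_left 1 k)).trans_eq ?_
      push_cast
      ring
    have hbs : Summable (fun k : ℕ =>
        B * (1 + max y 0) * Real.exp y * (1 / ((k : ℝ) + 1) ^ (3 / 2 : ℝ))) :=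
      hZsum.mul_left _
    calc (∑' k : ℕ, ∫ ω in surv ρ X y (k + 1),
          Real.exp (-(walk ρ X (k + 1) ω)) *
            V (X (k + 1) ω) (y + walk ρ X (k + 1) ω) ∂(Pr i)) ≤
        ∑' k : ℕ, B * (1 + max y 0) * Real.exp y * (1 / ((k : ℝ) + 1) ^ (3 / 2 : ℝ)) :=
        Summable.tsum_le_tsum hb (Summable.of_nonneg_of_le hnn hb hbs) hbs
      _ = B * (1 + max y 0) * Real.exp y * Z := by
        rw [tsum_mul_left, hZdef]
      _ ≤ B * (Z + 1) * (1 + max y 0) * Real.exp y := by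
        have hq0 : (0 : ℝ) ≤ B * (1 + max y 0) * Real.exp y := by
          have := Real.exp_pos y
          have h1 : (0 : ℝ) < 1 + max y 0 := by positivity
          positivity
        nlinarith

end Stmt19
end
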